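/- arXiv:2507.14884 — 4 statements merged into one kernel-verified Lean document; each statement's English description precedes it below -/
import Mathlib

section
/- Suppose three axis-parallel boxes B_1, B_2, B_3 in ℝ^d (each a product of nondegenerate closed intervals) pairwise intersect, and each pairwise intersection is contained in some hyperplane perpendicular to the first coordinate axis. Then a contradiction follows; i.e., no three such boxes can pairwise intersect. -/
open Set

/-- The closed axis-parallel box `∏ [a k, b k]` in `ℝ^d`. -/
def boxSet {d : ℕ} (a b : Fin d → ℝ) : Set (Fin d → ℝ) :=
  {x | ∀ k, x k ∈ Set.Icc (a k) (b k)}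

/-- The open interior `∏ (a k, b k)` of an axis-parallel box. -/
def openBoxSet {d : ℕ} (a b : Fin d → ℝ) : Set (Fin d → ℝ) :=
  {x | ∀ k, x k ∈ Set.Ioo (a k) (b k)}

/-- `G` is a `d`-CBU graph: the intersection graph of a family of nondegenerate
axis-parallel boxes in `ℝ^d` whose pairwise intersections lie in hyperplanes
perpendicular to the first coordinate axis. -/
def IsCBU (d : ℕ) (hd : 0 < d) {n : ℕ} (G : SimpleGraph (Fin n)) : Prop :=
  ∃ a b : Fin n → Fin d → ℝ,
    (∀ i k, a i k < b i k) ∧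
    (∀ i j : Fin n, i ≠ j →
      ∃ c : ℝ, boxSet (a i) (b i) ∩ boxSet (a j) (b j) ⊆ {x | x ⟨0, hd⟩ = c}) ∧
    (∀ i j : Fin n, G.Adj i j ↔
      i ≠ j ∧ (boxSet (a i) (b i) ∩ boxSet (a j) (b j)).Nonempty)

theorem no_three_boxes (d : ℕ) (hd : 0 < d) (a b : Fin 3 → Fin d → ℝ)
    (hab : ∀ i k, a i k < b i k)
    (hint : ∀ i j : Fin 3, i ≠ j →
      (boxSet (a i) (b i) ∩ boxSet (a j) (b j)).Nonempty)
    (huni : ∀ i j : Fin 3, i ≠ j →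
      ∃ c : ℝ, boxSet (a i) (b i) ∩ boxSet (a j) (b j) ⊆ {x | x ⟨0, hd⟩ = c}) :
    False := by
  set i0 : Fin d := ⟨0, hd⟩ with hi0
  have key : ∀ i j : Fin 3, i ≠ j →
      max (a i i0) (a j i0) = min (b i i0) (b j i0) := by
    intro i j hij
    obtain ⟨x, hxi, hxj⟩ := hint i j hij
    obtain ⟨c, hc⟩ := huni i j hij
    have hxi0 := hxi i0
    have hxj0 := hxj i0
    have hmax : max (a i i0) (a j i0) ≤ x i0 := max_le hxi0.1 hxj0.1
    have hmin : x i0 ≤ min (b i i0) (b j i0) := le_min hxi0.2 hxj0.2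
    have hy : Function.update x i0 (max (a i i0) (a j i0)) ∈
        boxSet (a i) (b i) ∩ boxSet (a j) (b j) := by
      refine ⟨fun k => ?_, fun k => ?_⟩ <;>
      · by_cases hk : k = i0
        · subst hk
          rw [Function.update_self]
          constructor
          · first | exact le_max_left _ _ | exact le_max_right _ _
          · first
            | exact hmax.trans hxi0.2
            | exact hmax.trans hxj0.2
        · rw [Function.update_of_ne hk]
          first | exact hxi k | exact hxj k
    have hz : Function.update x i0 (min (b i i0) (b j i0)) ∈
        boxSet (a i) (b i) ∩ boxSet (a j) (b j) := by
      refine ⟨fun k => ?_, fun k => ?_⟩ <;>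
      · by_cases hk : k = i0
        · subst hk
          rw [Function.update_self]
          constructor
          · first
            | exact hxi0.1.trans hmin
            | exact hxj0.1.trans hmin
          · first | exact min_le_left _ _ | exact min_le_right _ _
        · rw [Function.update_of_ne hk]
          first | exact hxi k | exact hxj k
    have h1 := hc hy
    have h2 := hc hz
    simp only [Set.mem_setOf_eq, Function.update_self] at h1 h2
    rw [h1, h2]
  have e01 := key 0 1 (by decide)
  have e02 := key 0 2 (by decide)
  have e12 := key 1 2 (by decide)
  have l1 : a 0 i0 ≤ max (a 0 i0) (a 1 i0) := le_max_left _ _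
  have l2 : a 1 i0 ≤ max (a 0 i0) (a 1 i0) := le_max_right _ _
  have l3 : min (b 0 i0) (b 1 i0) ≤ b 0 i0 := min_le_left _ _
  have l4 : min (b 0 i0) (b 1 i0) ≤ b 1 i0 := min_le_right _ _
  have l5 : a 0 i0 ≤ max (a 0 i0) (a 2 i0) := le_max_left _ _
  have l6 : a 2 i0 ≤ max (a 0 i0) (a 2 i0) := le_max_right _ _
  have l7 : min (b 0 i0) (b 2 i0) ≤ b 0 i0 := min_le_left _ _
  have l8 : min (b 0 i0) (b 2 i0) ≤ b 2 i0 := min_le_right _ _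
  have l9 : a 1 i0 ≤ max (a 1 i0) (a 2 i0) := le_max_left _ _
  have l10 : a 2 i0 ≤ max (a 1 i0) (a 2 i0) := le_max_right _ _
  have l11 : min (b 1 i0) (b 2 i0) ≤ b 1 i0 := min_le_left _ _
  have l12 : min (b 1 i0) (b 2 i0) ≤ b 2 i0 := min_le_right _ _
  have g0 := hab 0 i0
  have g1 := hab 1 i0
  have g2 := hab 2 i0
  rcases max_choice (a 0 i0) (a 1 i0) with h1 | h1 <;>
  rcases min_choice (b 0 i0) (b 1 i0) with h2 | h2 <;>
  rcases max_choice (a 0 i0) (a 2 i0) with h3 | h3 <;>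
  rcases min_choice (b 0 i0) (b 2 i0) with h4 | h4 <;>
  rcases max_choice (a 1 i0) (a 2 i0) with h5 | h5 <;>
  rcases min_choice (b 1 i0) (b 2 i0) with h6 | h6 <;>
  linarith
end

section
/- Every 1-CBU graph is properly 2-colorable: if G is the intersection graph of a finite family of nondegenerate closed intervals in ℝ such that any two distinct intersecting intervals meet only at a single shared endpoint, then χ(G) ≤ 2. -/
open Set

lemma touch_lemma {n : ℕ} {a b : Fin n → ℝ} (hab : ∀ i, a i < b i)
    {i j : Fin n}
    (hsub : (Set.Icc (a i) (b i) ∩ Set.Icc (a j) (b j)).Subsingleton)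
    (hne : (Set.Icc (a i) (b i) ∩ Set.Icc (a j) (b j)).Nonempty) :
    b i = a j ∨ b j = a i := by
  obtain ⟨x, hx1, hx2⟩ := hne
  have hmx : max (a i) (a j) ≤ x := max_le hx1.1 hx2.1
  have hxm : x ≤ min (b i) (b j) := le_min hx1.2 hx2.2
  have hmaxmem : max (a i) (a j) ∈ Set.Icc (a i) (b i) ∩ Set.Icc (a j) (b j) :=
    ⟨⟨le_max_left _ _, hmx.trans hx1.2⟩, ⟨le_max_right _ _, hmx.trans hx2.2⟩⟩
  have hminmem : min (b i) (b j) ∈ Set.Icc (a i) (b i) ∩ Set.Icc (a j) (b j) :=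
    ⟨⟨hx1.1.trans hxm, min_le_left _ _⟩, ⟨hx2.1.trans hxm, min_le_right _ _⟩⟩
  have hEq : max (a i) (a j) = min (b i) (b j) := hsub hmaxmem hminmem
  rcases le_total (b i) (b j) with h | h
  · left
    have hmin : min (b i) (b j) = b i := min_eq_left h
    rcases max_choice (a i) (a j) with hc | hc
    · exfalso; rw [hc, hmin] at hEq; exact absurd hEq (ne_of_lt (hab i))
    · rw [hc, hmin] at hEq; exact hEq.symm
  · right
    have hmin : min (b i) (b j) = b j := min_eq_right h
    rcases max_choice (a i) (a j) with hc | hc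
    · rw [hc, hmin] at hEq; exact hEq.symm
    · exfalso; rw [hc, hmin] at hEq; exact absurd hEq (ne_of_lt (hab j))

lemma filter_step {n : ℕ} {a b : Fin n → ℝ} (hab : ∀ i, a i < b i)
    (huni : ∀ i j : Fin n, i ≠ j →
      (Set.Icc (a i) (b i) ∩ Set.Icc (a j) (b j)).Subsingleton)
    {i j : Fin n} (hij : b i = a j) :
    Finset.filter (fun k => b k ≤ a j) Finset.univ
      = insert i (Finset.filter (fun k => b k ≤ a i) Finset.univ) := by
  ext k
  simp only [Finset.mem_filter, Finset.mem_univ, true_and, Finset.mem_insert]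
  constructor
  · intro hk
    by_cases hki : k = i
    · exact Or.inl hki
    · right
      by_contra hcon
      push_neg at hcon
      have h1 : a i < b k := hcon
      have h2 : b k ≤ b i := hk.trans hij.ge
      have hm : max (a i) (a k) < b k := max_lt h1 (hab k)
      have p1 : max (a i) (a k) ∈ Set.Icc (a k) (b k) ∩ Set.Icc (a i) (b i) :=
        ⟨⟨le_max_right _ _, hm.le⟩, ⟨le_max_left _ _, hm.le.trans h2⟩⟩
      have p2 : b k ∈ Set.Icc (a k) (b k) ∩ Set.Icc (a i) (b i) :=
        ⟨⟨(hab k).le, le_refl _⟩, ⟨h1.le, h2⟩⟩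
      exact absurd (huni k i hki p1 p2) (ne_of_lt hm)
  · rintro (rfl | hk)
    · exact hij.le
    · exact hk.trans ((hab i).le.trans hij.le)

lemma card_step {n : ℕ} {a b : Fin n → ℝ} (hab : ∀ i, a i < b i)
    (huni : ∀ i j : Fin n, i ≠ j →
      (Set.Icc (a i) (b i) ∩ Set.Icc (a j) (b j)).Subsingleton)
    {i j : Fin n} (hij : b i = a j) :
    (Finset.filter (fun k => b k ≤ a j) Finset.univ).card
      = (Finset.filter (fun k => b k ≤ a i) Finset.univ).card + 1 := by
  rw [filter_step hab huni hij, Finset.card_insert_of_notMem]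
  simp only [Finset.mem_filter, Finset.mem_univ, true_and, not_le]
  exact hab i

theorem oneCBU_two_colorable (n : ℕ) (a b : Fin n → ℝ) (hab : ∀ i, a i < b i)
    (huni : ∀ i j : Fin n, i ≠ j →
      (Set.Icc (a i) (b i) ∩ Set.Icc (a j) (b j)).Subsingleton)
    (G : SimpleGraph (Fin n))
    (hG : ∀ i j : Fin n, G.Adj i j ↔
      i ≠ j ∧ (Set.Icc (a i) (b i) ∩ Set.Icc (a j) (b j)).Nonempty) :
    G.chromaticNumber ≤ 2 := by
  set c : Fin n → ZMod 2 :=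
    fun i => ((Finset.filter (fun k => b k ≤ a i) Finset.univ).card : ZMod 2) with hc
  have hproper : ∀ i j : Fin n, G.Adj i j → c i ≠ c j := by
    intro i j hadj
    obtain ⟨hne, hinter⟩ := (hG i j).mp hadj
    rcases touch_lemma hab (huni i j hne) hinter with h | h
    · have := card_step hab huni h
      simp only [hc, this]
      push_cast
      intro hcon
      have : (1 : ZMod 2) = 0 := by linear_combination -hcon
      exact one_ne_zero this
    · have := card_step hab huni h
      simp only [hc, this]
      push_cast
      intro hcon
      have : (1 : ZMod 2) = 0 := by linear_combination hcon
      exact one_ne_zero this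
  have hcol : G.Colorable 2 := by
    have := (SimpleGraph.Coloring.mk c (fun h => hproper _ _ h)).colorable
    simpa using this
  exact hcol.chromaticNumber_le
end

section
/- The class of intersection graphs of finite families of axis-parallel rectangles in the plane is χ-bounded: there is a function f : ℕ → ℕ such that every intersection graph G of finitely many axis-parallel rectangles in ℝ² satisfies χ(G) ≤ f(ω(G)), where ω(G) is the clique number. (One may take f(k) = 4k² or any valid bound.) -/
open Set

open scoped Classical

section Aux

lemma fin2cases (m : Fin 2) : m = 0 ∨ m = 1 := by omega

def agPt (x y : ℝ) : Fin 2 → ℝ := fun m => if m = 0 then x else y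

@[simp] lemma agPt_zero (x y : ℝ) : agPt x y 0 = x := rfl
@[simp] lemma agPt_one (x y : ℝ) : agPt x y 1 = y := rfl

lemma agPt_eta (c : Fin 2 → ℝ) : agPt (c 0) (c 1) = c := by
  funext m
  rcases fin2cases m with rfl | rfl <;> simp

/-- Greedy coloring from a uniform bound on the minimum degree of induced subgraphs. -/
lemma degenColor {V : Type*} [Fintype V] [DecidableEq V] (H : SimpleGraph V)
    [DecidableRel H.Adj] (D : ℕ)
    (hmin : ∀ s : Finset V, s.Nonempty → ∃ v ∈ s, (s.filter (H.Adj v)).card ≤ D) :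
    ∃ f : V → Fin (D+1), ∀ i j, H.Adj i j → f i ≠ f j := by
  have key : ∀ s : Finset V, ∃ f : V → Fin (D+1),
      ∀ i ∈ s, ∀ j ∈ s, H.Adj i j → f i ≠ f j := by
    intro s
    induction s using Finset.strongInduction with
    | _ s ih =>
      rcases s.eq_empty_or_nonempty with rfl | hs
      · exact ⟨fun _ => 0, by simp⟩
      obtain ⟨v, hv, hdeg⟩ := hmin s hs
      obtain ⟨f, hf⟩ := ih (s.erase v) (Finset.erase_ssubset hv)
      set N := (s.filter (H.Adj v)).image f with hN
      have hNcard : N.card < D + 1 :=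
        lt_of_le_of_lt (le_trans Finset.card_image_le hdeg) (Nat.lt_succ_self D)
      have hex : ∃ c : Fin (D+1), c ∉ N := by
        by_contra h
        push_neg at h
        have hsub : (Finset.univ : Finset (Fin (D+1))) ⊆ N := fun c _ => h c
        have := Finset.card_le_card hsub
        simp at this
        omega
      obtain ⟨c, hc⟩ := hex
      refine ⟨Function.update f v c, ?_⟩
      intro i hi j hj hadj
      by_cases hiv : i = v <;> by_cases hjv : j = v
      · exfalso; rw [hiv, hjv] at hadj; exact H.loopless.irrefl v hadj
      · subst hiv
        rw [Function.update_self, Function.update_of_ne hjv]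
        intro hcontra
        exact hc (hcontra ▸ Finset.mem_image_of_mem f (Finset.mem_filter.2 ⟨hj, hadj⟩))
      · subst hjv
        rw [Function.update_of_ne hiv, Function.update_self]
        intro hcontra
        exact hc (hcontra ▸ Finset.mem_image_of_mem f (Finset.mem_filter.2 ⟨hi, hadj.symm⟩))
      · rw [Function.update_of_ne hiv, Function.update_of_ne hjv]
        exact hf i (Finset.mem_erase.2 ⟨hiv, hi⟩) j (Finset.mem_erase.2 ⟨hjv, hj⟩) hadj
  obtain ⟨f, hf⟩ := key Finset.univ
  exact ⟨f, fun i j h => hf i (Finset.mem_univ i) j (Finset.mem_univ j) h⟩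

lemma cliqueCardLe {V : Type*} {G : SimpleGraph V} {k : ℕ} (hk : G.CliqueFree (k+1))
    (t : Finset V) (ht : ∀ x ∈ t, ∀ y ∈ t, x ≠ y → G.Adj x y) : t.card ≤ k := by
  by_contra h
  push_neg at h
  obtain ⟨u, hut, hcard⟩ := Finset.exists_subset_card_eq h
  exact hk u ⟨fun x hx y hy hxy => ht x (hut hx) y (hut hy) hxy, hcard⟩

end Aux

section Heights
variable {n : ℕ} (R : Fin n → Fin n → Prop)

def agChainCond (v : Fin n) (s : Finset (Fin n)) : Prop :=
  v ∈ s ∧ (∀ x ∈ s, x = v ∨ R x v) ∧ (∀ x ∈ s, ∀ y ∈ s, x = y ∨ R x y ∨ R y x)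

noncomputable def agHeight (v : Fin n) : ℕ :=
  Finset.univ.sup fun s : Finset (Fin n) => if agChainCond R v s then s.card else 0

variable {R}
variable (htrans : ∀ {i j l}, R i j → R j l → R i l) (hirr : ∀ i, ¬ R i i)

include htrans hirr

lemma agHeight_lt {i j : Fin n} (hij : R i j) : agHeight R i < agHeight R j := by
  obtain ⟨s, -, hsup⟩ := Finset.exists_mem_eq_sup Finset.univ
    ⟨∅, Finset.mem_univ ∅⟩ (fun s : Finset (Fin n) => if agChainCond R i s then s.card else 0)
  rw [show agHeight R i = _ from hsup]
  by_cases hc : agChainCond R i s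
  · rw [if_pos hc]
    have hji : j ∉ s := by
      intro hjs
      rcases hc.2.1 j hjs with rfl | hcr
      · exact hirr j hij
      · exact hirr i (htrans hij hcr)
    have hcond : agChainCond R j (insert j s) := by
      refine ⟨Finset.mem_insert_self j s, ?_, ?_⟩
      · intro x hx
        rcases Finset.mem_insert.1 hx with hxj | hxs
        · exact Or.inl hxj
        · rcases hc.2.1 x hxs with hxi | hcr
          · exact Or.inr (hxi ▸ hij)
          · exact Or.inr (htrans hcr hij)
      · intro x hx y hy
        rcases Finset.mem_insert.1 hx with hxj | hxs
        · rcases Finset.mem_insert.1 hy with hyj | hys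
          · exact Or.inl (hxj.trans hyj.symm)
          · subst hxj
            rcases hc.2.1 y hys with hyi | hcr
            · exact Or.inr (Or.inr (hyi ▸ hij))
            · exact Or.inr (Or.inr (htrans hcr hij))
        · rcases Finset.mem_insert.1 hy with hyj | hys
          · subst hyj
            rcases hc.2.1 x hxs with hxi | hcr
            · exact Or.inr (Or.inl (hxi ▸ hij))
            · exact Or.inr (Or.inl (htrans hcr hij))
          · exact hc.2.2 x hxs y hys
    have hle : (if agChainCond R j (insert j s) then (insert j s).card else 0) ≤ agHeight R j :=
      Finset.le_sup (f := fun s : Finset (Fin n) => if agChainCond R j s then s.card else 0)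
        (Finset.mem_univ (insert j s))
    rw [if_pos hcond, Finset.card_insert_of_notMem hji] at hle
    omega
  · rw [if_neg hc]
    have hcond : agChainCond R j {j} :=
      ⟨Finset.mem_singleton_self j, fun x hx => Or.inl (Finset.mem_singleton.1 hx),
        fun x hx y hy => Or.inl (by rw [Finset.mem_singleton.1 hx, Finset.mem_singleton.1 hy])⟩
    have hle : (if agChainCond R j {j} then ({j} : Finset (Fin n)).card else 0) ≤ agHeight R j :=
      Finset.le_sup (f := fun s : Finset (Fin n) => if agChainCond R j s then s.card else 0)
        (Finset.mem_univ ({j} : Finset (Fin n)))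
    rw [if_pos hcond, Finset.card_singleton] at hle
    omega

omit htrans hirr in
lemma agHeight_le {G : SimpleGraph (Fin n)} {k : ℕ} (hk : G.CliqueFree (k+1))
    (hadj : ∀ {x y}, R x y → G.Adj x y) (v : Fin n) : agHeight R v ≤ k := by
  apply Finset.sup_le
  intro s _
  split_ifs with hs
  · by_contra hlt
    push_neg at hlt
    obtain ⟨u, hus, hcard⟩ := Finset.exists_subset_card_eq hlt
    refine hk u ⟨?_, hcard⟩
    intro x hx y hy hxy
    rcases hs.2.2 x (hus hx) y (hus hy) with rfl | h | h
    · exact absurd rfl hxy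
    · exact hadj h
    · exact (hadj h).symm
  · exact Nat.zero_le _
end Heights

section AG
variable {n : ℕ} (a b : Fin n → Fin 2 → ℝ) (G : SimpleGraph (Fin n))

/-- A corner of box `i` lies in both boxes `i` and `j`. -/
def agW (i j : Fin n) : Prop :=
  ∃ p : Fin 2 → ℝ, (∀ m, p m = a i m ∨ p m = b i m) ∧
    p ∈ boxSet (a i) (b i) ∧ p ∈ boxSet (a j) (b j)

/-- Boxes `i` and `j` cross, with the x-extent of `i` strictly inside that of `j`. -/
def agCross (i j : Fin n) : Prop :=
  G.Adj i j ∧ a j 0 < a i 0 ∧ b i 0 < b j 0 ∧ a i 1 < a j 1 ∧ b j 1 < b i 1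

/-- The corner-intersection graph. -/
def agCorner : SimpleGraph (Fin n) where
  Adj i j := G.Adj i j ∧ (agW a b i j ∨ agW a b j i)
  symm := ⟨fun _ _ ⟨h, hw⟩ => ⟨h.symm, hw.symm⟩⟩
  loopless := ⟨fun i ⟨h, _⟩ => G.loopless.irrefl i h⟩

variable {a b G}
variable (hG : ∀ i j : Fin n, G.Adj i j ↔
    i ≠ j ∧ (boxSet (a i) (b i) ∩ boxSet (a j) (b j)).Nonempty)

include hG

lemma agNonempty {i j : Fin n} (h : G.Adj i j) :
    (∀ m, a i m ≤ b i m) ∧ (∀ m, a j m ≤ b j m) := by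
  obtain ⟨-, x, hxi, hxj⟩ := (hG i j).1 h
  exact ⟨fun m => le_trans (hxi m).1 (hxi m).2, fun m => le_trans (hxj m).1 (hxj m).2⟩

lemma agCross_trans {i j l : Fin n} (h1 : agCross a b G i j) (h2 : agCross a b G j l) :
    agCross a b G i l := by
  obtain ⟨hij, c1, c2, c3, c4⟩ := h1
  obtain ⟨hjl, d1, d2, d3, d4⟩ := h2
  have hiNE := (agNonempty hG hij).1
  have hlNE := (agNonempty hG hjl).2
  refine ⟨(hG i l).2 ⟨?_, ⟨agPt (a i 0) (a l 1), ?_, ?_⟩⟩, by linarith, by linarith,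
    by linarith, by linarith⟩
  · intro h
    rw [h] at c1
    linarith
  · intro m
    rcases fin2cases m with rfl | rfl
    · exact ⟨le_refl _, hiNE 0⟩
    · constructor
      · simp only [agPt_one]; linarith [hlNE 1]
      · simp only [agPt_one]; linarith [hlNE 1]
  · intro m
    rcases fin2cases m with rfl | rfl
    · constructor
      · simp only [agPt_zero]; linarith
      · simp only [agPt_zero]; linarith [hiNE 0]
    · exact ⟨le_refl _, hlNE 1⟩

omit hG in
lemma agCross_irrefl (i : Fin n) : ¬ agCross a b G i i := fun h => G.loopless.irrefl i h.1

omit hG in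
lemma agCorner_exists {i j : Fin n} (x : Fin 2 → ℝ)
    (hxi : x ∈ boxSet (a i) (b i)) (hxj : x ∈ boxSet (a j) (b j))
    (hE : ∀ m, a j m ≤ a i m ∨ b i m ≤ b j m) : agW a b i j := by
  refine ⟨fun m => if a j m ≤ a i m then a i m else b i m, ?_, ?_, ?_⟩
  · intro m
    by_cases h : a j m ≤ a i m <;> simp [h]
  · intro m
    have hab : a i m ≤ b i m := le_trans (hxi m).1 (hxi m).2
    by_cases h : a j m ≤ a i m
    · simp only [if_pos h]; exact ⟨le_refl _, hab⟩
    · simp only [if_neg h]; exact ⟨hab, le_refl _⟩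
  · intro m
    by_cases h : a j m ≤ a i m
    · simp only [if_pos h]
      exact ⟨h, le_trans (hxi m).1 (hxj m).2⟩
    · simp only [if_neg h]
      refine ⟨le_trans (hxj m).1 (hxi m).2, ?_⟩
      rcases hE m with h' | h'
      · exact absurd h' h
      · exact h'

lemma agDichotomy {i j : Fin n} (h : G.Adj i j) :
    (agW a b i j ∨ agW a b j i) ∨ agCross a b G i j ∨ agCross a b G j i := by
  obtain ⟨hne, x, hxi, hxj⟩ := (hG i j).1 h
  by_cases hEi : ∀ m, a j m ≤ a i m ∨ b i m ≤ b j m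
  · exact Or.inl (Or.inl (agCorner_exists x hxi hxj hEi))
  by_cases hEj : ∀ m, a i m ≤ a j m ∨ b j m ≤ b i m
  · exact Or.inl (Or.inr (agCorner_exists x hxj hxi hEj))
  push_neg at hEi hEj
  obtain ⟨m1, h1a, h1b⟩ := hEi
  obtain ⟨m2, h2a, h2b⟩ := hEj
  rcases fin2cases m1 with rfl | rfl <;> rcases fin2cases m2 with rfl | rfl
  · linarith
  · exact Or.inr (Or.inr ⟨h.symm, h1a, h1b, h2a, h2b⟩)
  · exact Or.inr (Or.inl ⟨h, h2a, h2b, h1a, h1b⟩)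
  · linarith

variable {k : ℕ} (hk : G.CliqueFree (k+1))

include hk

/-- At most `k` boxes other than `v` contain a fixed point that is also in box `v`. -/
lemma agPointBound (p : Fin 2 → ℝ) (v : Fin n) (s : Finset (Fin n)) :
    (s.filter fun u => u ≠ v ∧ p ∈ boxSet (a v) (b v) ∧ p ∈ boxSet (a u) (b u)).card ≤ k := by
  set F := s.filter fun u => u ≠ v ∧ p ∈ boxSet (a v) (b v) ∧ p ∈ boxSet (a u) (b u) with hF
  rcases F.eq_empty_or_nonempty with h | ⟨u0, hu0⟩
  · rw [h]; simp
  have hu0' := Finset.mem_filter.1 hu0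
  have hpv : p ∈ boxSet (a v) (b v) := hu0'.2.2.1
  have hbox : ∀ x ∈ insert v F, p ∈ boxSet (a x) (b x) := by
    intro x hx
    rcases Finset.mem_insert.1 hx with rfl | hx
    · exact hpv
    · exact (Finset.mem_filter.1 hx).2.2.2
  have hclique : ∀ x ∈ insert v F, ∀ y ∈ insert v F, x ≠ y → G.Adj x y := by
    intro x hx y hy hxy
    exact (hG x y).2 ⟨hxy, p, hbox x hx, hbox y hy⟩
  have hcard := cliqueCardLe hk _ hclique
  have hvF : v ∉ F := fun hv => (Finset.mem_filter.1 hv).2.1 rfl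
  rw [Finset.card_insert_of_notMem hvF] at hcard
  omega

lemma agWBound (v : Fin n) (s : Finset (Fin n)) :
    (s.filter fun u => u ≠ v ∧ agW a b v u).card ≤ 4 * k := by
  set F : (Fin 2 → ℝ) → Finset (Fin n) := fun p =>
    s.filter fun u => u ≠ v ∧ p ∈ boxSet (a v) (b v) ∧ p ∈ boxSet (a u) (b u) with hFdef
  have hsub : (s.filter fun u => u ≠ v ∧ agW a b v u) ⊆
      ((F (agPt (a v 0) (a v 1)) ∪ F (agPt (a v 0) (b v 1))) ∪
        (F (agPt (b v 0) (a v 1)) ∪ F (agPt (b v 0) (b v 1)))) := by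
    intro u hu
    obtain ⟨hus, hne, p, hcor, hpv, hpu⟩ := Finset.mem_filter.1 hu
    have hmem : ∀ q : Fin 2 → ℝ, q = p → u ∈ F q := by
      rintro q rfl
      exact Finset.mem_filter.2 ⟨hus, hne, hpv, hpu⟩
    have heta := agPt_eta p
    simp only [Finset.mem_union]
    rcases hcor 0 with h0 | h0 <;> rcases hcor 1 with h1 | h1
    · exact Or.inl (Or.inl (hmem _ (by rw [h0, h1] at heta; exact heta)))
    · exact Or.inl (Or.inr (hmem _ (by rw [h0, h1] at heta; exact heta)))
    · exact Or.inr (Or.inl (hmem _ (by rw [h0, h1] at heta; exact heta)))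
    · exact Or.inr (Or.inr (hmem _ (by rw [h0, h1] at heta; exact heta)))
  calc (s.filter fun u => u ≠ v ∧ agW a b v u).card
      ≤ _ := Finset.card_le_card hsub
    _ ≤ (F (agPt (a v 0) (a v 1)) ∪ F (agPt (a v 0) (b v 1))).card +
        (F (agPt (b v 0) (a v 1)) ∪ F (agPt (b v 0) (b v 1))).card :=
        Finset.card_union_le _ _
    _ ≤ ((F (agPt (a v 0) (a v 1))).card + (F (agPt (a v 0) (b v 1))).card) +
        ((F (agPt (b v 0) (a v 1))).card + (F (agPt (b v 0) (b v 1))).card) :=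
        Nat.add_le_add (Finset.card_union_le _ _) (Finset.card_union_le _ _)
    _ ≤ 4 * k := by
        have h1 := agPointBound hG hk (agPt (a v 0) (a v 1)) v s
        have h2 := agPointBound hG hk (agPt (a v 0) (b v 1)) v s
        have h3 := agPointBound hG hk (agPt (b v 0) (a v 1)) v s
        have h4 := agPointBound hG hk (agPt (b v 0) (b v 1)) v s
        simp only [hFdef]
        omega

lemma agCornerMinDeg (s : Finset (Fin n)) (hs : s.Nonempty) :
    ∃ v ∈ s, (s.filter ((agCorner a b G).Adj v)).card ≤ 8 * k := by
  by_contra h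
  push_neg at h
  have hsum : ∀ v ∈ s, (s.filter ((agCorner a b G).Adj v)).card ≤
      (s.filter fun u => u ≠ v ∧ agW a b v u).card +
      (s.filter fun u => u ≠ v ∧ agW a b u v).card := by
    intro v _
    refine le_trans (Finset.card_le_card ?_) (Finset.card_union_le _ _)
    intro u hu
    obtain ⟨hus, hadj, hw⟩ := Finset.mem_filter.1 hu
    have hne : u ≠ v := (G.ne_of_adj hadj).symm
    rcases hw with hw | hw
    · exact Finset.mem_union.2 (Or.inl (Finset.mem_filter.2 ⟨hus, hne, hw⟩))
    · exact Finset.mem_union.2 (Or.inr (Finset.mem_filter.2 ⟨hus, hne, hw⟩))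
  have hswap : ∑ v ∈ s, (s.filter fun u => u ≠ v ∧ agW a b u v).card
      = ∑ v ∈ s, (s.filter fun u => v ≠ u ∧ agW a b v u).card := by
    simp only [Finset.card_filter]
    exact Finset.sum_comm
  have hsw2 : ∀ v, (s.filter fun u => v ≠ u ∧ agW a b v u)
      = (s.filter fun u => u ≠ v ∧ agW a b v u) := by
    intro v
    apply Finset.filter_congr
    intro u _
    rw [ne_comm]
  have hup : ∑ v ∈ s, (s.filter ((agCorner a b G).Adj v)).card ≤ 8 * k * s.card := by
    calc ∑ v ∈ s, (s.filter ((agCorner a b G).Adj v)).card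
        ≤ ∑ v ∈ s, ((s.filter fun u => u ≠ v ∧ agW a b v u).card +
            (s.filter fun u => u ≠ v ∧ agW a b u v).card) := Finset.sum_le_sum hsum
      _ = ∑ v ∈ s, (s.filter fun u => u ≠ v ∧ agW a b v u).card +
            ∑ v ∈ s, (s.filter fun u => u ≠ v ∧ agW a b u v).card := Finset.sum_add_distrib
      _ = ∑ v ∈ s, (s.filter fun u => u ≠ v ∧ agW a b v u).card +
            ∑ v ∈ s, (s.filter fun u => u ≠ v ∧ agW a b v u).card := by
            rw [hswap]
            simp only [hsw2]
      _ ≤ 4 * k * s.card + 4 * k * s.card := by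
            have hb := fun v => agWBound hG hk v s
            have h1 : ∑ v ∈ s, (s.filter fun u => u ≠ v ∧ agW a b v u).card
                ≤ ∑ _v ∈ s, 4 * k := Finset.sum_le_sum fun v _ => hb v
            rw [Finset.sum_const, smul_eq_mul, mul_comm] at h1
            omega
      _ = 8 * k * s.card := by ring
  have hlow : (8 * k + 1) * s.card ≤ ∑ v ∈ s, (s.filter ((agCorner a b G).Adj v)).card := by
    have h1 : ∀ v ∈ s, 8 * k + 1 ≤ (s.filter ((agCorner a b G).Adj v)).card :=
      fun v hv => h v hv
    calc (8 * k + 1) * s.card = ∑ _v ∈ s, (8 * k + 1) := by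
          rw [Finset.sum_const, smul_eq_mul, mul_comm]
      _ ≤ _ := Finset.sum_le_sum h1
  have hc : 0 < s.card := Finset.card_pos.2 hs
  nlinarith [hup, hlow]

end AG

theorem rectangles_chi_bounded :
    ∃ f : ℕ → ℕ, ∀ (n : ℕ) (a b : Fin n → Fin 2 → ℝ)
      (G : SimpleGraph (Fin n)),
      (∀ i j : Fin n, G.Adj i j ↔
        i ≠ j ∧ (boxSet (a i) (b i) ∩ boxSet (a j) (b j)).Nonempty) →
      ∀ k : ℕ, G.CliqueFree (k + 1) → G.chromaticNumber ≤ (f k : ℕ∞) := by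
  refine ⟨fun k => (8 * k + 1) * (k + 1), ?_⟩
  intro n a b G hG k hk
  obtain ⟨fc, hfc⟩ := degenColor (agCorner a b G) (8 * k) (agCornerMinDeg hG hk)
  have hirr : ∀ i, ¬ agCross a b G i i := agCross_irrefl
  have hhle : ∀ v, agHeight (agCross a b G) v ≤ k :=
    agHeight_le hk (fun h => h.1)
  set C : Fin n → Fin (8 * k + 1) × Fin (k + 1) :=
    fun v => (fc v, ⟨agHeight (agCross a b G) v, Nat.lt_succ_of_le (hhle v)⟩) with hC
  have hCvalid : ∀ {i j : Fin n}, G.Adj i j → C i ≠ C j := by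
    intro i j hadj heq
    have h1 : fc i = fc j := congrArg Prod.fst heq
    have h2 : agHeight (agCross a b G) i = agHeight (agCross a b G) j := by
      have := congrArg Prod.snd heq
      exact Fin.mk.inj_iff.1 this
    rcases agDichotomy hG hadj with hcor | hcr | hcr
    · exact hfc i j ⟨hadj, hcor⟩ h1
    · exact absurd h2 (ne_of_lt (agHeight_lt (R := agCross a b G) (i := i) (j := j) (fun h1 h2 => agCross_trans hG h1 h2) hirr hcr))
    · exact absurd h2 (ne_of_gt (agHeight_lt (R := agCross a b G) (i := j) (j := i) (fun h1 h2 => agCross_trans hG h1 h2) hirr hcr))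
  let Col : G.Coloring (Fin (8 * k + 1) × Fin (k + 1)) :=
    SimpleGraph.Coloring.mk C fun hadj => hCvalid hadj
  have hcol : G.Colorable ((8 * k + 1) * (k + 1)) := by
    have := Col.colorable
    rwa [Fintype.card_prod, Fintype.card_fin, Fintype.card_fin] at this
  exact hcol.chromaticNumber_le
end

section
/- The graph consisting of a 6-cycle v_1 v_2 v_3 v_4 v_5 v_6 together with a hub vertex h adjacent to v_1, v_3, and v_5 is a 2-CBU graph: it can be realized as the intersection graph of 7 axis-parallel rectangles in the plane such that every pairwise intersection of distinct rectangles lies in a vertical line. -/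
open Set

/-- The 6-cycle `v₁ v₂ v₃ v₄ v₅ v₆` (vertices `0,…,5`) plus a hub `6`
adjacent to `v₁, v₃, v₅` (vertices `0, 2, 4`). -/
def G₁ : SimpleGraph (Fin 7) :=
  SimpleGraph.fromRel (fun u v =>
    ((u : ℕ), (v : ℕ)) ∈
      [(0, 1), (1, 2), (2, 3), (3, 4), (4, 5), (5, 0), (6, 0), (6, 2), (6, 4)])

/- Auxiliary construction: 7 rectangles realizing G₁. -/

/-- Lower corners of the rectangles. -/
def av : Fin 7 → Fin 2 → ℝ := ![![0,0], ![1,-4], ![2,0], ![3,2], ![2,8], ![1,11], ![1,2]]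
/-- Upper corners of the rectangles. -/
def bv : Fin 7 → Fin 2 → ℝ := ![![1,12], ![2,1], ![3,4], ![4,10], ![3,12], ![2,16], ![2,10]]

lemma touchL {a1 b1 a2 b2 : Fin 2 → ℝ} {c : ℝ} (h1 : b1 0 ≤ c) (h2 : c ≤ a2 0) :
    boxSet a1 b1 ∩ boxSet a2 b2 ⊆ {x | x 0 = c} := by
  rintro x ⟨hx1, hx2⟩
  have u1 := (hx1 0).2
  have u2 := (hx2 0).1
  have : x 0 = c := le_antisymm (u1.trans h1) (h2.trans u2)
  exact this

lemma touchR {a1 b1 a2 b2 : Fin 2 → ℝ} {c : ℝ} (h1 : b2 0 ≤ c) (h2 : c ≤ a1 0) :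
    boxSet a1 b1 ∩ boxSet a2 b2 ⊆ {x | x 0 = c} := by
  rintro x ⟨hx1, hx2⟩
  have u1 := (hx2 0).2
  have u2 := (hx1 0).1
  have : x 0 = c := le_antisymm (u1.trans h1) (h2.trans u2)
  exact this

lemma emptySub {a1 b1 a2 b2 : Fin 2 → ℝ} {k : Fin 2} (h : b1 k < a2 k ∨ b2 k < a1 k)
    (T : Set (Fin 2 → ℝ)) : boxSet a1 b1 ∩ boxSet a2 b2 ⊆ T := by
  rintro x ⟨hx1, hx2⟩
  exfalso
  rcases h with h | h
  · linarith [(hx1 k).2, (hx2 k).1]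
  · linarith [(hx2 k).2, (hx1 k).1]

lemma mem_box2 {a b x : Fin 2 → ℝ} (h0 : a 0 ≤ x 0) (h0' : x 0 ≤ b 0)
    (h1 : a 1 ≤ x 1) (h1' : x 1 ≤ b 1) : x ∈ boxSet a b := by
  intro k
  fin_cases k
  · exact ⟨h0, h0'⟩
  · exact ⟨h1, h1'⟩

lemma notNonempty {a1 b1 a2 b2 : Fin 2 → ℝ} {k : Fin 2} (h : b1 k < a2 k ∨ b2 k < a1 k) :
    ¬ (boxSet a1 b1 ∩ boxSet a2 b2).Nonempty := by
  rintro ⟨x, hx⟩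
  exact absurd (emptySub h ∅ hx) (Set.notMem_empty x)

set_option maxHeartbeats 2000000 in
theorem G₁_is_two_CBU : IsCBU 2 (by norm_num) G₁ := by
  refine ⟨av, bv, ?_, ?_, ?_⟩
  · intro i k
    fin_cases i <;> fin_cases k <;> norm_num [av, bv]
  · intro i j hij
    fin_cases i <;> fin_cases j <;>
      first
      | exact absurd rfl hij
      | (refine ⟨1, touchL ?_ ?_⟩ <;> (norm_num [av, bv]; done))
      | (refine ⟨2, touchL ?_ ?_⟩ <;> (norm_num [av, bv]; done))
      | (refine ⟨3, touchL ?_ ?_⟩ <;> (norm_num [av, bv]; done))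
      | (refine ⟨1, touchR ?_ ?_⟩ <;> (norm_num [av, bv]; done))
      | (refine ⟨2, touchR ?_ ?_⟩ <;> (norm_num [av, bv]; done))
      | (refine ⟨3, touchR ?_ ?_⟩ <;> (norm_num [av, bv]; done))
      | (refine ⟨0, emptySub (k := 0) (Or.inl ?_) _⟩; (norm_num [av, bv]; done))
      | (refine ⟨0, emptySub (k := 0) (Or.inr ?_) _⟩; (norm_num [av, bv]; done))
      | (refine ⟨0, emptySub (k := 1) (Or.inl ?_) _⟩; (norm_num [av, bv]; done))
      | (refine ⟨0, emptySub (k := 1) (Or.inr ?_) _⟩; (norm_num [av, bv]; done))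
  · intro i j
    rw [G₁, SimpleGraph.fromRel_adj]
    fin_cases i <;> fin_cases j <;>
      first
      | (refine iff_of_false ?_ (fun h => h.1 rfl); decide)
      | (refine iff_of_false ?_ (fun h => notNonempty (k := 0) (Or.inl ?_) h.2) <;>
          first | decide | (norm_num [av, bv]; done))
      | (refine iff_of_false ?_ (fun h => notNonempty (k := 0) (Or.inr ?_) h.2) <;>
          first | decide | (norm_num [av, bv]; done))
      | (refine iff_of_false ?_ (fun h => notNonempty (k := 1) (Or.inl ?_) h.2) <;>
          first | decide | (norm_num [av, bv]; done))
      | (refine iff_of_false ?_ (fun h => notNonempty (k := 1) (Or.inr ?_) h.2) <;>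
          first | decide | (norm_num [av, bv]; done))
      | (refine iff_of_true ?_ ⟨?_, (![1,0] : Fin 2 → ℝ), mem_box2 ?_ ?_ ?_ ?_, mem_box2 ?_ ?_ ?_ ?_⟩ <;>
          first | decide | (norm_num [av, bv]; done))
      | (refine iff_of_true ?_ ⟨?_, (![2,0] : Fin 2 → ℝ), mem_box2 ?_ ?_ ?_ ?_, mem_box2 ?_ ?_ ?_ ?_⟩ <;>
          first | decide | (norm_num [av, bv]; done))
      | (refine iff_of_true ?_ ⟨?_, (![3,2] : Fin 2 → ℝ), mem_box2 ?_ ?_ ?_ ?_, mem_box2 ?_ ?_ ?_ ?_⟩ <;>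
          first | decide | (norm_num [av, bv]; done))
      | (refine iff_of_true ?_ ⟨?_, (![3,8] : Fin 2 → ℝ), mem_box2 ?_ ?_ ?_ ?_, mem_box2 ?_ ?_ ?_ ?_⟩ <;>
          first | decide | (norm_num [av, bv]; done))
      | (refine iff_of_true ?_ ⟨?_, (![2,11] : Fin 2 → ℝ), mem_box2 ?_ ?_ ?_ ?_, mem_box2 ?_ ?_ ?_ ?_⟩ <;>
          first | decide | (norm_num [av, bv]; done))
      | (refine iff_of_true ?_ ⟨?_, (![1,11] : Fin 2 → ℝ), mem_box2 ?_ ?_ ?_ ?_, mem_box2 ?_ ?_ ?_ ?_⟩ <;>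
          first | decide | (norm_num [av, bv]; done))
      | (refine iff_of_true ?_ ⟨?_, (![1,2] : Fin 2 → ℝ), mem_box2 ?_ ?_ ?_ ?_, mem_box2 ?_ ?_ ?_ ?_⟩ <;>
          first | decide | (norm_num [av, bv]; done))
      | (refine iff_of_true ?_ ⟨?_, (![2,2] : Fin 2 → ℝ), mem_box2 ?_ ?_ ?_ ?_, mem_box2 ?_ ?_ ?_ ?_⟩ <;>
          first | decide | (norm_num [av, bv]; done))
      | (refine iff_of_true ?_ ⟨?_, (![2,8] : Fin 2 → ℝ), mem_box2 ?_ ?_ ?_ ?_, mem_box2 ?_ ?_ ?_ ?_⟩ <;>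
          first | decide | (norm_num [av, bv]; done))
end
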